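/- arXiv:2604.00226 — 2 statements merged into one kernel-verified Lean document; each statement's English description precedes it below -/
import Mathlib

section
/- Let ζ : ℝ → ℝ be continuous, bounded, nonnegative with ∫_ℝ ζ(x) dx = 1 and ∫_ℝ ζ(x)|x| dx < ∞. With Δ₁ := max{∫_ℝ σ ζ(σ) dσ, 0} and Δ₂ := ∫_{−∞}^{0} |σ| ζ(σ) dσ, the smoothed positive part satisfies −δ Δ₁ ≤ (x)_{+,δ} − (x)_+ ≤ δ Δ₂ for all x ∈ ℝ and all δ > 0. -/
open MeasureTheory

noncomputable def Acdf (ζ : ℝ → ℝ) (δ τ : ℝ) : ℝ :=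
  ∫ σ in Set.Iic τ, (1 / δ) * ζ (σ / δ)

noncomputable def smoothPos (ζ : ℝ → ℝ) (δ x : ℝ) : ℝ :=
  ∫ τ in Set.Iic x, Acdf ζ δ τ

/-- Inner integral computation: the integral over `Iic y` of the indicator of `Ici σ`
times a constant `c` equals `c * max 0 (y - σ)`. -/
lemma inner_indicator_integral (y σ c : ℝ) :
    (∫ u in Set.Iic y, (if σ ≤ u then c else 0)) = c * max 0 (y - σ) := by
  have h1 : (fun u => if σ ≤ u then c else 0) = Set.indicator (Set.Ici σ) (fun _ => c) := by
    funext u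
    simp [Set.indicator, Set.mem_Ici]
  rw [h1, setIntegral_indicator measurableSet_Ici, setIntegral_const]
  have h2 : Set.Iic y ∩ Set.Ici σ = Set.Icc σ y := by
    rw [Set.inter_comm, Set.Ici_inter_Iic]
  rw [h2, measureReal_def, Real.volume_Icc, smul_eq_mul, mul_comm]
  congr 1
  rw [ENNReal.toReal_ofReal', max_comm]

/-- Key Fubini identity: for integrable `g` with integrable first moment,
`∫_{u ≤ y} ∫_{s ≤ u} g(s) ds du = ∫ g(σ) max 0 (y - σ) dσ`. -/
lemma fubini_key (g : ℝ → ℝ) (hgc : Continuous g) (hg : Integrable g)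
    (hg1 : Integrable (fun σ => g σ * |σ|)) (y : ℝ) :
    (∫ u in Set.Iic y, (∫ s in Set.Iic u, g s)) = ∫ σ, g σ * max 0 (y - σ) := by
  set f : ℝ → ℝ → ℝ := fun σ u => if σ ≤ u then g σ else 0 with hf
  have hmeas : AEStronglyMeasurable (Function.uncurry f)
      (volume.prod (volume.restrict (Set.Iic y))) := by
    apply Measurable.aestronglyMeasurable
    exact Measurable.ite (measurableSet_le measurable_fst measurable_snd)
      (hgc.measurable.comp measurable_fst) measurable_const
  -- pointwise computation of the inner integral in the first variable
  have hinner : ∀ σ, (∫ u in Set.Iic y, f σ u) = g σ * max 0 (y - σ) := fun σ =>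
    inner_indicator_integral y σ (g σ)
  have hinnernorm : ∀ σ, (∫ u in Set.Iic y, ‖f σ u‖) = ‖g σ‖ * max 0 (y - σ) := by
    intro σ
    have : (fun u => ‖f σ u‖) = fun u => if σ ≤ u then ‖g σ‖ else 0 := by
      funext u; by_cases h : σ ≤ u <;> simp [hf, h]
    rw [this, inner_indicator_integral y σ ‖g σ‖]
  -- integrability of the dominating function
  have hdom : Integrable (fun σ => ‖g σ‖ * max 0 (y - σ)) := by
    have hbound : Integrable (fun σ => ‖g σ‖ * |y| + ‖g σ * |σ|‖) :=
      (hg.norm.mul_const |y|).add hg1.norm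
    refine hbound.mono ?_ ?_
    · exact ((hgc.norm.mul (continuous_const.max
        (continuous_const.sub continuous_id))).aestronglyMeasurable)
    · filter_upwards with σ
      have h0 : max 0 (y - σ) ≤ |y| + |σ| := by
        apply max_le (by positivity)
        calc y - σ ≤ |y - σ| := le_abs_self _
          _ ≤ |y| + |σ| := abs_sub _ _
      have h1 : ‖‖g σ‖ * max 0 (y - σ)‖ = ‖g σ‖ * max 0 (y - σ) := by
        rw [Real.norm_eq_abs, abs_of_nonneg (by positivity)]
      rw [h1]
      have h2 : ‖g σ‖ * max 0 (y - σ) ≤ ‖g σ‖ * (|y| + |σ|) :=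
        mul_le_mul_of_nonneg_left h0 (norm_nonneg _)
      have h3 : ‖g σ‖ * (|y| + |σ|) = ‖g σ‖ * |y| + ‖g σ * |σ|‖ := by
        rw [mul_add]
        congr 1
        rw [Real.norm_eq_abs, Real.norm_eq_abs, abs_mul, abs_abs]
      calc ‖g σ‖ * max 0 (y - σ) ≤ ‖g σ‖ * (|y| + |σ|) := h2
        _ = ‖g σ‖ * |y| + ‖g σ * |σ|‖ := h3
        _ ≤ ‖‖g σ‖ * |y| + ‖g σ * |σ|‖‖ := le_abs_self _
  -- integrability on the product
  have hint : Integrable (Function.uncurry f)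
      (volume.prod (volume.restrict (Set.Iic y))) := by
    rw [integrable_prod_iff hmeas]
    constructor
    · filter_upwards with σ
      have : (fun u => Function.uncurry f (σ, u)) =
          Set.indicator (Set.Ici σ) (fun _ => g σ) := by
        funext u; simp [Function.uncurry, hf, Set.indicator, Set.mem_Ici]
      rw [this]
      rw [integrable_indicator_iff measurableSet_Ici]
      apply (integrableOn_const_iff).mpr
      right
      rw [Measure.restrict_apply measurableSet_Ici, Set.Ici_inter_Iic, Real.volume_Icc]
      exact ENNReal.ofReal_lt_top
    · have : (fun σ => ∫ u in Set.Iic y, ‖Function.uncurry f (σ, u)‖) =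
          fun σ => ‖g σ‖ * max 0 (y - σ) := by
        funext σ; exact hinnernorm σ
      rw [this]
      exact hdom
  have hswap := integral_integral_swap hint
  -- LHS of swap : ∫ σ, ∫ u in Iic y, f σ u = ∫ σ, g σ * max 0 (y - σ)
  have hL : (∫ σ, ∫ u in Set.Iic y, f σ u) = ∫ σ, g σ * max 0 (y - σ) := by
    congr 1; funext σ; exact hinner σ
  -- RHS of swap : ∫ u in Iic y, ∫ σ, f σ u = ∫ u in Iic y, ∫ s in Iic u, g s
  have hR : (∫ u in Set.Iic y, ∫ σ, f σ u) = ∫ u in Set.Iic y, ∫ s in Set.Iic u, g s := by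
    apply setIntegral_congr_fun measurableSet_Iic
    intro u _
    show (∫ σ, f σ u) = ∫ s in Set.Iic u, g s
    have : (fun σ => f σ u) = Set.indicator (Set.Iic u) g := by
      funext σ; simp [hf, Set.indicator, Set.mem_Iic]
    rw [this, integral_indicator measurableSet_Iic]
  rw [← hR, ← hswap, hL]

/-- Two-sided bound `−δΔ₁ ≤ (x)_{+,δ} − (x)₊ ≤ δΔ₂` with
`Δ₁ = max{∫ σ ζ(σ) dσ, 0}` and `Δ₂ = ∫_{-∞}^0 |σ| ζ(σ) dσ`. -/
theorem smoothPos_sub_posPart_bounds (ζ : ℝ → ℝ) (hc : Continuous ζ)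
    (hb : ∃ M, ∀ x, ζ x ≤ M) (hnn : ∀ x, 0 ≤ ζ x)
    (hone : (∫ x, ζ x) = 1)
    (hmom : Integrable (fun x => ζ x * |x|)) (δ : ℝ) (hδ : 0 < δ) (x : ℝ) :
    -δ * max (∫ σ, σ * ζ σ) 0 ≤ smoothPos ζ δ x - max 0 x ∧
      smoothPos ζ δ x - max 0 x ≤ δ * ∫ σ in Set.Iic (0 : ℝ), |σ| * ζ σ := by
  have hδ' : δ ≠ 0 := ne_of_gt hδ
  -- ζ is integrable
  have hζint : Integrable ζ := by
    by_contra h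
    rw [integral_undef h] at hone
    exact one_ne_zero hone.symm
  -- the scaled kernel
  set g : ℝ → ℝ := fun σ => (1 / δ) * ζ (σ / δ) with hg
  have hgc : Continuous g := continuous_const.mul (hc.comp (continuous_id.div_const δ))
  have hgint : Integrable g := (hζint.comp_div hδ').const_mul (1 / δ)
  have hgmom : Integrable (fun σ => g σ * |σ|) := by
    have h1 : Integrable (fun σ => ζ (σ / δ) * |σ / δ|) := hmom.comp_div hδ'
    have h2 : (fun σ => g σ * |σ|) = fun σ => ζ (σ / δ) * |σ / δ| := by
      funext σ
      rw [hg]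
      simp only []
      rw [abs_div, abs_of_pos hδ]
      ring
    rw [h2]; exact h1
  -- identity: smoothPos ζ δ x = ∫ u, ζ u * max 0 (x - δ u)
  have hid : smoothPos ζ δ x = ∫ u, ζ u * max 0 (x - δ * u) := by
    have h1 : smoothPos ζ δ x = ∫ σ, g σ * max 0 (x - σ) := by
      rw [smoothPos]
      exact fubini_key g hgc hgint hgmom x
    rw [h1]
    have h2 : (fun σ : ℝ => g σ * max 0 (x - σ)) =
        fun σ : ℝ => ((fun u : ℝ => (1 / δ) * (ζ u * max 0 (x - δ * u))) (σ / δ)) := by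
      funext σ
      simp only [hg]
      rw [mul_div_cancel₀ _ hδ']
      ring
    rw [h2, Measure.integral_comp_div (fun u : ℝ => (1 / δ) * (ζ u * max 0 (x - δ * u))) δ]
    rw [integral_const_mul, abs_of_pos hδ, smul_eq_mul]
    rw [← mul_assoc, mul_one_div_cancel hδ', one_mul]
  -- integrability of the main integrand
  have hmain : Integrable (fun u => ζ u * max 0 (x - δ * u)) := by
    have hbound : Integrable (fun u => ζ u * |x| + δ * (ζ u * |u|)) :=
      (hζint.mul_const |x|).add (hmom.const_mul δ)
    refine hbound.mono ((hc.mul (continuous_const.max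
      (continuous_const.sub (continuous_const.mul continuous_id)))).aestronglyMeasurable) ?_
    filter_upwards with u
    have h0 : max 0 (x - δ * u) ≤ |x| + δ * |u| := by
      apply max_le (by positivity)
      calc x - δ * u ≤ |x - δ * u| := le_abs_self _
        _ ≤ |x| + |δ * u| := abs_sub _ _
        _ = |x| + δ * |u| := by rw [abs_mul, abs_of_pos hδ]
    have hnn' : (0:ℝ) ≤ ζ u * max 0 (x - δ * u) := mul_nonneg (hnn u) (le_max_left _ _)
    rw [Real.norm_eq_abs, abs_of_nonneg hnn']
    calc ζ u * max 0 (x - δ * u) ≤ ζ u * (|x| + δ * |u|) :=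
          mul_le_mul_of_nonneg_left h0 (hnn u)
      _ = ζ u * |x| + δ * (ζ u * |u|) := by ring
      _ ≤ ‖ζ u * |x| + δ * (ζ u * |u|)‖ := le_abs_self _
  -- integrability of σ * ζ σ and ζ σ * max 0 (-σ)
  have hmom' : Integrable (fun σ => σ * ζ σ) := by
    refine hmom.mono ((continuous_id.mul hc).aestronglyMeasurable) ?_
    filter_upwards with σ
    rw [Real.norm_eq_abs, Real.norm_eq_abs, abs_mul, abs_mul, abs_abs, mul_comm]
  have hneg : Integrable (fun σ => ζ σ * max 0 (-σ)) := by
    refine hmom.mono ((hc.mul (continuous_const.max continuous_neg)).aestronglyMeasurable) ?_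
    filter_upwards with σ
    have h1 : (0:ℝ) ≤ ζ σ * max 0 (-σ) := mul_nonneg (hnn σ) (le_max_left _ _)
    rw [Real.norm_eq_abs, Real.norm_eq_abs, abs_of_nonneg h1, abs_mul, abs_abs,
      abs_of_nonneg (hnn σ)]
    exact mul_le_mul_of_nonneg_left (max_le (abs_nonneg σ) (neg_le_abs σ)) (hnn σ)
  -- the J identity: ∫ ζ σ * max 0 (-σ) = ∫_{Iic 0} |σ| * ζ σ
  have hJ : (∫ σ, ζ σ * max 0 (-σ)) = ∫ σ in Set.Iic (0:ℝ), |σ| * ζ σ := by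
    rw [← integral_indicator measurableSet_Iic]
    congr 1
    funext σ
    rcases le_or_gt σ 0 with h | h
    · rw [Set.indicator_of_mem (Set.mem_Iic.mpr h)]
      rw [max_eq_right (neg_nonneg.mpr h), abs_of_nonpos h, mul_comm]
    · rw [Set.indicator_of_notMem (by simpa using h)]
      rw [max_eq_left (neg_nonpos.mpr h.le), mul_zero]
  constructor
  · -- lower bound
    rcases le_or_gt x 0 with hx | hx
    · -- x ≤ 0 : smoothPos ≥ 0 and max 0 x = 0
      rw [max_eq_left hx]
      have h1 : 0 ≤ smoothPos ζ δ x := by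
        rw [hid]
        exact integral_nonneg fun u => mul_nonneg (hnn u) (le_max_left _ _)
      have h2 : -δ * max (∫ σ, σ * ζ σ) 0 ≤ 0 := by
        have := le_max_right (∫ σ, σ * ζ σ) 0
        nlinarith [le_max_right (∫ σ, σ * ζ σ) 0]
      linarith
    · -- 0 < x
      rw [max_eq_right hx.le]
      have h1 : (∫ u, ζ u * (x - δ * u)) ≤ smoothPos ζ δ x := by
        rw [hid]
        apply integral_mono ?_ hmain ?_
        · have : (fun u => ζ u * (x - δ * u)) =
              fun u => x * ζ u - δ * (u * ζ u) := by funext u; ring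
          rw [this]
          exact (hζint.const_mul x).sub (hmom'.const_mul δ)
        · intro u
          exact mul_le_mul_of_nonneg_left (le_max_right _ _) (hnn u)
      have h2 : (∫ u, ζ u * (x - δ * u)) = x - δ * ∫ σ, σ * ζ σ := by
        have : (fun u => ζ u * (x - δ * u)) =
            fun u => x * ζ u - δ * (u * ζ u) := by funext u; ring
        rw [this, integral_sub (hζint.const_mul x) (hmom'.const_mul δ),
          integral_const_mul, integral_const_mul, hone, mul_one]
      have h3 : δ * (∫ σ, σ * ζ σ) ≤ δ * max (∫ σ, σ * ζ σ) 0 :=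
        mul_le_mul_of_nonneg_left (le_max_left _ _) hδ.le
      linarith
  · -- upper bound
    rw [hid]
    have h1 : (∫ u, ζ u * max 0 (x - δ * u)) ≤
        ∫ u, ζ u * max 0 x + δ * (ζ u * max 0 (-u)) := by
      apply integral_mono hmain ((hζint.mul_const _).add (hneg.const_mul δ))
      intro u
      have : max 0 (x - δ * u) ≤ max 0 x + δ * max 0 (-u) := by
        apply max_le (by positivity)
        have h1 : x ≤ max 0 x := le_max_right _ _
        have h2 : -u ≤ max 0 (-u) := le_max_right _ _
        nlinarith
      calc ζ u * max 0 (x - δ * u) ≤ ζ u * (max 0 x + δ * max 0 (-u)) :=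
            mul_le_mul_of_nonneg_left this (hnn u)
        _ = ζ u * max 0 x + δ * (ζ u * max 0 (-u)) := by ring
    have h2 : (∫ u, ζ u * max 0 x + δ * (ζ u * max 0 (-u))) =
        max 0 x + δ * ∫ σ in Set.Iic (0:ℝ), |σ| * ζ σ := by
      rw [integral_add (hζint.mul_const _) (hneg.const_mul δ),
        integral_mul_const, integral_const_mul, hone, one_mul, hJ]
    linarith
end

section
/- Assume ζ : ℝ → ℝ is continuous, bounded, nonnegative with ∫ ζ = 1, ∫ ζ(x)|x| dx < ∞, and that either ∫_ℝ ζ(x)x dx ≤ 0 or ∫_{−∞}^{0} ζ(x)|x| dx = 0. Then for each fixed δ > 0, either (x)_{+,δ} ≤ (x)_+ for all x ∈ ℝ, or (x)_+ ≤ (x)_{+,δ} for all x ∈ ℝ. -/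
open MeasureTheory

/-- Under the sign assumption on `ζ`, for each `δ > 0` the smoothed positive part lies
entirely below or entirely above the positive part. -/
theorem smoothPos_one_sided (ζ : ℝ → ℝ) (hc : Continuous ζ)
    (hb : ∃ M, ∀ x, ζ x ≤ M) (hnn : ∀ x, 0 ≤ ζ x)
    (hone : (∫ x, ζ x) = 1)
    (hmom : Integrable (fun x => ζ x * |x|))
    (hsign : (∫ x, ζ x * x) ≤ 0 ∨ (∫ x in Set.Iic (0 : ℝ), ζ x * |x|) = 0)
    (δ : ℝ) (hδ : 0 < δ) :
    (∀ x : ℝ, smoothPos ζ δ x ≤ max 0 x) ∨ (∀ x : ℝ, max 0 x ≤ smoothPos ζ δ x) := by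
  have hδ' : δ ≠ 0 := ne_of_gt hδ
  set f : ℝ → ℝ := fun σ => (1 / δ) * ζ (σ / δ) with hfdef
  have hζint : Integrable ζ := by
    by_contra h
    rw [integral_undef h] at hone
    norm_num at hone
  have hfcont : Continuous f := continuous_const.mul (hc.comp (continuous_id.div_const δ))
  have hfnn : ∀ σ, 0 ≤ f σ := fun σ => mul_nonneg (by positivity) (hnn _)
  have hfint : Integrable f := (hζint.comp_div hδ').const_mul _
  have hftot : (∫ σ, f σ) = 1 := by
    have h1 : (∫ σ, f σ) = (1 / δ) * ∫ σ, ζ (σ / δ) := integral_const_mul _ _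
    rw [h1, Measure.integral_comp_div ζ δ, hone, smul_eq_mul, abs_of_pos hδ]
    field_simp
  have hfmom : Integrable (fun σ => f σ * |σ|) := by
    have h2 : (fun σ => f σ * |σ|) = fun σ => ζ (σ / δ) * |σ / δ| := by
      funext σ
      rw [hfdef]
      simp only
      rw [abs_div, abs_of_pos hδ]
      ring
    rw [h2]
    exact hmom.comp_div hδ'
  have heqs : (fun σ => σ * f σ) = fun σ => (σ / δ) * ζ (σ / δ) := by
    funext σ
    rw [hfdef]
    simp only
    field_simp
  have hgmom : Integrable (fun u => u * ζ u) := by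
    refine hmom.mono ((continuous_id.mul hc).aestronglyMeasurable) ?_
    filter_upwards with u
    simp only [Real.norm_eq_abs, abs_mul, abs_abs, abs_of_nonneg (hnn u)]
    rw [mul_comm]
  have hsmom : Integrable (fun σ => σ * f σ) := by
    rw [heqs]
    exact hgmom.comp_div hδ'
  -- integrability of the kernel integrand
  have hGint : ∀ x : ℝ, Integrable (fun σ => max 0 (x - σ) * f σ) := by
    intro x
    have hgint2 : Integrable (fun σ => (|x| + |σ|) * f σ) := by
      have he : (fun σ => (|x| + |σ|) * f σ) = fun σ => |x| * f σ + f σ * |σ| := by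
        funext σ; ring
      rw [he]
      exact (hfint.const_mul _).add hfmom
    refine hgint2.mono
      (((continuous_const.max (continuous_const.sub continuous_id)).mul
        hfcont).aestronglyMeasurable) ?_
    filter_upwards with σ
    have h1 : max 0 (x - σ) ≤ |x| + |σ| := by
      refine max_le (by positivity) ?_
      have := le_abs_self x
      have := neg_le_abs σ
      linarith
    have h2 : (0:ℝ) ≤ (|x| + |σ|) * f σ := by
      have := hfnn σ
      positivity
    rw [Real.norm_eq_abs, Real.norm_eq_abs, abs_of_nonneg h2,
      abs_of_nonneg (mul_nonneg (le_max_left _ _) (hfnn σ))]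
    exact mul_le_mul_of_nonneg_right h1 (hfnn σ)
  -- the inner integral computation
  have hinner : ∀ x σ : ℝ,
      (∫ τ in Set.Iic x, (Set.Ici σ).indicator (fun _ => f σ) τ) = max 0 (x - σ) * f σ := by
    intro x σ
    rw [integral_indicator measurableSet_Ici, setIntegral_const, smul_eq_mul, measureReal_def,
      Measure.restrict_apply measurableSet_Ici, Set.Ici_inter_Iic, Real.volume_Icc,
      ENNReal.toReal_ofReal', max_comm]
  -- the representation of smoothPos as an expectation
  have hrep : ∀ x : ℝ, smoothPos ζ δ x = ∫ σ, max 0 (x - σ) * f σ := by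
    intro x
    set F : ℝ × ℝ → ℝ := Set.indicator {p : ℝ × ℝ | p.2 ≤ p.1} (fun p => f p.2) with hFdef
    have hslice1 : ∀ τ σ : ℝ, F (τ, σ) = (Set.Iic τ).indicator f σ := by
      intro τ σ
      simp [hFdef, Set.indicator_apply, Set.mem_setOf_eq, Set.mem_Iic]
    have hslice2 : ∀ σ τ : ℝ, F (τ, σ) = (Set.Ici σ).indicator (fun _ => f σ) τ := by
      intro σ τ
      simp [hFdef, Set.indicator_apply, Set.mem_setOf_eq, Set.mem_Ici]
    have hFmeas : AEStronglyMeasurable F ((volume.restrict (Set.Iic x)).prod volume) := by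
      refine ((hfcont.comp continuous_snd).stronglyMeasurable.indicator ?_).aestronglyMeasurable
      exact measurableSet_le measurable_snd measurable_fst
    have hFnn : ∀ p : ℝ × ℝ, 0 ≤ F p := by
      intro p
      exact Set.indicator_nonneg (fun q _ => hfnn q.2) p
    have hFint : Integrable F ((volume.restrict (Set.Iic x)).prod volume) := by
      rw [integrable_prod_iff' hFmeas]
      constructor
      · filter_upwards with σ
        have : (fun τ => F (τ, σ)) = (Set.Ici σ).indicator (fun _ => f σ) :=
          funext (hslice2 σ)
        rw [this, integrable_indicator_iff measurableSet_Ici]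
        rw [integrableOn_const_iff]
        right
        rw [Measure.restrict_apply measurableSet_Ici, Set.Ici_inter_Iic, Real.volume_Icc]
        exact ENNReal.ofReal_lt_top
      · have : (fun σ => ∫ τ, ‖F (τ, σ)‖ ∂(volume.restrict (Set.Iic x)))
            = fun σ => max 0 (x - σ) * f σ := by
          funext σ
          have hnrm : (fun τ => ‖F (τ, σ)‖) = fun τ => (Set.Ici σ).indicator (fun _ => f σ) τ := by
            funext τ
            rw [Real.norm_eq_abs, abs_of_nonneg (hFnn _), hslice2 σ τ]
          rw [hnrm]
          exact hinner x σ
        rw [this]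
        exact hGint x
    calc smoothPos ζ δ x
        = ∫ τ in Set.Iic x, ∫ σ, F (τ, σ) := by
          refine integral_congr_ae (Filter.EventuallyEq.of_eq (funext fun τ => ?_))
          have h1 : Acdf ζ δ τ = ∫ σ, (Set.Iic τ).indicator f σ := by
            rw [show Acdf ζ δ τ = ∫ σ in Set.Iic τ, f σ from rfl,
              ← integral_indicator measurableSet_Iic]
          rw [h1]
          exact integral_congr_ae (Filter.EventuallyEq.of_eq
            (funext fun σ => (hslice1 τ σ).symm))
      _ = ∫ σ, ∫ τ in Set.Iic x, F (τ, σ) := integral_integral_swap hFint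
      _ = ∫ σ, max 0 (x - σ) * f σ := by
          refine integral_congr_ae (Filter.EventuallyEq.of_eq (funext fun σ => ?_))
          rw [show (fun τ => F (τ, σ)) = (Set.Ici σ).indicator (fun _ => f σ)
            from funext (hslice2 σ)]
          exact hinner x σ
  rcases hsign with hm | h0
  · -- mean nonpositive: smoothPos lies above the positive part
    right
    intro x
    rw [hrep x]
    have hmean : (∫ σ, σ * f σ) ≤ 0 := by
      rw [heqs, Measure.integral_comp_div (fun u => u * ζ u) δ, smul_eq_mul, abs_of_pos hδ]
      have : (∫ u, u * ζ u) = ∫ u, ζ u * u := by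
        refine integral_congr_ae (Filter.EventuallyEq.of_eq (funext fun u => mul_comm _ _))
      rw [this]
      exact mul_nonpos_of_nonneg_of_nonpos hδ.le hm
    have h0le : 0 ≤ ∫ σ, max 0 (x - σ) * f σ :=
      integral_nonneg fun σ => mul_nonneg (le_max_left _ _) (hfnn σ)
    have hlin : Integrable (fun σ => (x - σ) * f σ) := by
      have : (fun σ => (x - σ) * f σ) = fun σ => x * f σ - σ * f σ := by
        funext σ; ring
      rw [this]
      exact (hfint.const_mul x).sub hsmom
    have hval : (∫ σ, (x - σ) * f σ) = x * (∫ σ, f σ) - ∫ σ, σ * f σ := by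
      have h3 : (fun σ => (x - σ) * f σ) = fun σ => x * f σ - σ * f σ := by
        funext σ; ring
      rw [h3, integral_sub (hfint.const_mul x) hsmom, integral_const_mul]
    have hxle : x ≤ ∫ σ, max 0 (x - σ) * f σ := by
      have hle : (∫ σ, (x - σ) * f σ) ≤ ∫ σ, max 0 (x - σ) * f σ :=
        integral_mono hlin (hGint x)
          (fun σ => mul_le_mul_of_nonneg_right (le_max_right _ _) (hfnn σ))
      rw [hval, hftot] at hle
      linarith
    exact max_le h0le hxle
  · -- ζ supported on the nonnegative axis: smoothPos lies below the positive part
    left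
    have hae : ∀ᵐ t ∂(volume.restrict (Set.Iic (0:ℝ))), ζ t * |t| = 0 := by
      have hint : IntegrableOn (fun t => ζ t * |t|) (Set.Iic (0:ℝ)) := hmom.integrableOn
      have := (integral_eq_zero_iff_of_nonneg
        (fun t => mul_nonneg (hnn t) (abs_nonneg t)) hint).1 h0
      filter_upwards [this] with t ht using ht
    have hz : ∀ t : ℝ, t < 0 → ζ t = 0 := by
      intro t ht
      by_contra hne
      have hpos : 0 < ζ t * |t| :=
        mul_pos (lt_of_le_of_ne (hnn t) (Ne.symm hne)) (abs_pos.2 (ne_of_lt ht))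
      set U : Set ℝ := {s | 0 < ζ s * |s|} ∩ Set.Iio 0 with hUdef
      have hUopen : IsOpen U :=
        (isOpen_lt continuous_const (hc.mul continuous_abs)).inter isOpen_Iio
      have htU : t ∈ U := ⟨hpos, ht⟩
      have hnull : (volume.restrict (Set.Iic (0:ℝ))) {s | ¬ ζ s * |s| = 0} = 0 :=
        ae_iff.mp hae
      have hUnull : (volume.restrict (Set.Iic (0:ℝ))) U = 0 :=
        measure_mono_null (fun s hs => ne_of_gt hs.1) hnull
      rw [Measure.restrict_apply' measurableSet_Iic] at hUnull
      have hsub : U ⊆ U ∩ Set.Iic 0 := by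
        intro s hs
        refine ⟨hs, ?_⟩
        have h2 : s ∈ Set.Iio (0:ℝ) := hs.2
        exact Set.Iio_subset_Iic_self h2
      have : volume U = 0 := measure_mono_null hsub hUnull
      exact (hUopen.measure_pos volume ⟨t, htU⟩).ne' this
    have hfz : ∀ σ : ℝ, σ < 0 → f σ = 0 := by
      intro σ hσ
      rw [hfdef]
      simp only
      rw [hz (σ / δ) (div_neg_of_neg_of_pos hσ hδ), mul_zero]
    intro x
    rw [hrep x]
    have hbound : ∀ σ : ℝ, max 0 (x - σ) * f σ ≤ max 0 x * f σ := by
      intro σ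
      rcases lt_or_ge σ 0 with hσ | hσ
      · rw [hfz σ hσ, mul_zero, mul_zero]
      · exact mul_le_mul_of_nonneg_right
          (max_le_max le_rfl (by linarith)) (hfnn σ)
    calc (∫ σ, max 0 (x - σ) * f σ)
        ≤ ∫ σ, max 0 x * f σ := integral_mono (hGint x) (hfint.const_mul _) hbound
      _ = max 0 x := by rw [integral_const_mul, hftot, mul_one]
end
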